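/- Let 𝔐 = (M, ⊕, ⪯, 0) be a distance monoid and let G = (G, d) be a finite connected 𝔐-graph that is 𝔐-metric. For distinct u, v ∈ G define d'(u, v) to be the ⪯-minimum of the 𝔐-lengths of all paths from u to v, and set d'(u, u) = 0. Then (G, d') is an 𝔐-metric space, and d'(u, v) = d(u, v) whenever d(u, v) is defined. -/

import Mathlib

/-- `p` is a path from `u` to `v` in the `𝔐`-graph with (partial, `Option`-valued)
edge function `E`: it starts at `u`, ends at `v`, has no repeated vertices, and
consecutive vertices are joined by edges. -/
def IsPathFrom {M V : Type*} (E : V → V → Option M) (u v : V) (p : List V) : Prop :=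
  p.head? = some u ∧ p.getLast? = some v ∧ p.Nodup ∧
    p.Chain' fun a b => (E a b).isSome

/-- The `𝔐`-length of a walk `p`: the sum of the edge labels of consecutive pairs. -/
def walkLength {M V : Type*} [AddCommMonoid M] (E : V → V → Option M)
    (p : List V) : M :=
  ((p.zip p.tail).map fun q => (E q.1 q.2).getD 0).sum

section Aux

variable {M V : Type*} [AddCommMonoid M] (E : V → V → Option M)

lemma wl_nil : walkLength E ([] : List V) = 0 := by simp [walkLength]

lemma wl_single (a : V) : walkLength E [a] = 0 := by simp [walkLength]

lemma wl_cons2 (a b : V) (l : List V) :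
    walkLength E (a :: b :: l) = (E a b).getD 0 + walkLength E (b :: l) := by
  simp [walkLength]

lemma wl_append (y : V) (ys : List V) : ∀ xs : List V,
    walkLength E (xs ++ y :: ys) = walkLength E (xs ++ [y]) + walkLength E (y :: ys)
  | [] => by simp [wl_single]
  | [x] => by
      simp only [List.cons_append, List.nil_append, wl_cons2, wl_single, add_zero]
  | x :: x' :: xs => by
      have ih := wl_append y ys (x' :: xs)
      simp only [List.cons_append] at *
      rw [wl_cons2, wl_cons2, ih, add_assoc]

lemma wl_reverse (hs : ∀ u v : V, E u v = E v u) : ∀ p : List V,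
    walkLength E p.reverse = walkLength E p
  | [] => rfl
  | [a] => rfl
  | a :: b :: t => by
      have ih := wl_reverse hs (b :: t)
      have h1 : (a :: b :: t).reverse = t.reverse ++ b :: [a] := by simp
      rw [h1, wl_append, wl_cons2, wl_single, add_zero]
      have h2 : t.reverse ++ [b] = (b :: t).reverse := by simp
      rw [h2, ih, wl_cons2, hs b a, add_comm]

lemma exists_dup_split {α : Type*} : ∀ l : List α, ¬ l.Nodup →
    ∃ (a : α) (l₁ l₂ l₃ : List α), l = l₁ ++ a :: l₂ ++ a :: l₃
  | [], h => absurd List.nodup_nil h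
  | x :: t, h => by
      by_cases hx : x ∈ t
      · obtain ⟨l₂, l₃, rfl⟩ := List.append_of_mem hx
        exact ⟨x, [], l₂, l₃, rfl⟩
      · have ht : ¬ t.Nodup := fun hn => h (List.nodup_cons.mpr ⟨hx, hn⟩)
        obtain ⟨a, l₁, l₂, l₃, rfl⟩ := exists_dup_split t ht
        exact ⟨a, x :: l₁, l₂, l₃, rfl⟩

/-- reversing a path -/
lemma isPathFrom_reverse (hs : ∀ u v : V, E u v = E v u) {u v : V} {p : List V}
    (hp : IsPathFrom E u v p) : IsPathFrom E v u p.reverse := by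
  obtain ⟨hh, hl, hnd, hch⟩ := hp
  refine ⟨?_, ?_, List.nodup_reverse.mpr hnd, ?_⟩
  · rw [List.head?_reverse]; exact hl
  · rw [List.getLast?_reverse]; exact hh
  · show List.IsChain _ p.reverse; rw [List.isChain_reverse]
    exact List.IsChain.imp (fun a b hab => by simpa [flip, hs a b] using hab) hch

end Aux

section Aux2

variable {M V : Type*} [AddCommMonoid M] [LinearOrder M]

/-- the true metric is bounded by the length of any walk connecting two points -/
lemma dm_le_walk (E : V → V → Option M) (dm : V → V → M)
    (hdm0 : ∀ a b : V, dm a b = 0 ↔ a = b)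
    (hdmt : ∀ a b c : V, dm a c ≤ dm a b + dm b c)
    (hdmE : ∀ u v : V, ∀ x : M, E u v = some x → dm u v = x)
    (hmono : ∀ a b c d : M, a ≤ c → b ≤ d → a + b ≤ c + d) :
    ∀ (p : List V) (u v : V), p.head? = some u → p.getLast? = some v →
      (p.Chain' fun a b => (E a b).isSome) → dm u v ≤ walkLength E p
  | [], u, v, hh, _, _ => by simp at hh
  | [a], u, v, hh, hl, _ => by
      simp only [List.head?_cons, Option.some.injEq] at hh
      simp only [List.getLast?_singleton, Option.some.injEq] at hl
      subst hh; subst hl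
      rw [(hdm0 a a).mpr rfl, wl_single]
  | a :: b :: t, u, v, hh, hl, hch => by
      simp only [List.head?_cons, Option.some.injEq] at hh
      subst hh
      obtain ⟨hab, hch'⟩ := List.isChain_cons_cons.mp hch
      obtain ⟨x, hx⟩ := Option.isSome_iff_exists.mp hab
      have hl' : (b :: t).getLast? = some v := by
        rw [← hl]; rfl
      have ih := dm_le_walk E dm hdm0 hdmt hdmE hmono (b :: t) b v rfl hl' hch'
      calc dm a v ≤ dm a b + dm b v := hdmt a b v
        _ ≤ (E a b).getD 0 + walkLength E (b :: t) := by
            refine hmono _ _ _ _ ?_ ih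
            rw [hdmE a b x hx, hx, Option.getD_some]
        _ = walkLength E (a :: b :: t) := (wl_cons2 E a b t).symm
  termination_by p => p.length

end Aux2

section Aux3

variable {M V : Type*} [AddCommMonoid M] [LinearOrder M]

/-- the shortest-path distance is bounded by the length of any walk -/
lemma d'_le_walk (E : V → V → Option M) (d' : V → V → M)
    (hzero : ∀ a : M, 0 ≤ a)
    (hmono : ∀ a b c d : M, a ≤ c → b ≤ d → a + b ≤ c + d)
    (hd'min : ∀ u v : V, u ≠ v →
      (∃ p : List V, IsPathFrom E u v p ∧ walkLength E p = d' u v) ∧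
      (∀ p : List V, IsPathFrom E u v p → d' u v ≤ walkLength E p)) :
    ∀ (n : ℕ) (p : List V) (u v : V), p.length ≤ n → u ≠ v →
      p.head? = some u → p.getLast? = some v →
      (p.Chain' fun a b => (E a b).isSome) → d' u v ≤ walkLength E p := by
  intro n
  induction n with
  | zero =>
      intro p u v hlen _ hh _ _
      rw [Nat.le_zero, List.length_eq_zero_iff] at hlen
      subst hlen; simp at hh
  | succ n ih =>
      intro p u v hlen huv hh hl hch
      by_cases hnd : p.Nodup
      · exact (hd'min u v huv).2 p ⟨hh, hl, hnd, hch⟩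
      · obtain ⟨a, l₁, l₂, l₃, rfl⟩ := exists_dup_split p hnd
        -- the spliced walk
        set s : List V := l₁ ++ a :: l₃ with hs
        have hslen : s.length ≤ n := by
          simp only [hs, List.length_append, List.length_cons] at hlen ⊢
          omega
        -- head
        have hsh : s.head? = some u := by
          rw [hs]
          cases l₁ with
          | nil =>
              simp only [List.nil_append, List.head?_cons] at hh ⊢
              exact hh
          | cons x xs =>
              simp only [List.cons_append, List.head?_cons] at hh ⊢
              exact hh
        -- last
        have hsl : s.getLast? = some v := by
          have h1 : (l₁ ++ a :: l₂ ++ a :: l₃).getLast? = (a :: l₃).getLast? := by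
            rw [List.getLast?_append, List.getLast?_append]
            cases h : (a :: l₃).getLast? with
            | none => simp at h
            | some w => rfl
          have h2 : s.getLast? = (a :: l₃).getLast? := by
            rw [hs, List.getLast?_append]
            cases h : (a :: l₃).getLast? with
            | none => simp at h
            | some w => rfl
          rw [h2, ← h1, hl]
        -- chain
        have hch0 : (l₁ ++ (a :: l₂) ++ a :: l₃).Chain' fun a b => (E a b).isSome := by
          simpa [List.append_assoc] using hch
        have hcha := List.isChain_append.mp hch0
        have hch1 : (l₁ ++ (a :: l₂)).Chain' fun a b => (E a b).isSome := hcha.1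
        have hch1' := List.isChain_append.mp hch1
        have hch2 : (a :: l₃).Chain' fun a b => (E a b).isSome := hcha.2.1
        have hsch : s.Chain' fun a b => (E a b).isSome := by
          show List.IsChain _ _; rw [hs, List.isChain_append]
          refine ⟨hch1'.1, hch2, ?_⟩
          intro x hx y hy
          simp only [List.head?_cons, Option.mem_def, Option.some.injEq] at hy
          subst hy
          exact hch1'.2.2 x hx a rfl
        -- length comparison
        have hwl : walkLength E s ≤ walkLength E (l₁ ++ a :: l₂ ++ a :: l₃) := by
          have e1 : walkLength E (l₁ ++ a :: (l₂ ++ a :: l₃))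
              = walkLength E (l₁ ++ [a]) + walkLength E (a :: (l₂ ++ a :: l₃)) :=
            wl_append E a (l₂ ++ a :: l₃) l₁
          have e2 : walkLength E (a :: (l₂ ++ a :: l₃))
              = walkLength E ((a :: l₂) ++ [a]) + walkLength E (a :: l₃) := by
            have := wl_append E a l₃ (a :: l₂)
            simpa using this
          have e3 : walkLength E s = walkLength E (l₁ ++ [a]) + walkLength E (a :: l₃) :=
            wl_append E a l₃ l₁
          calc walkLength E s
              = walkLength E (l₁ ++ [a]) + (0 + walkLength E (a :: l₃)) := by
                rw [e3, zero_add]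
            _ ≤ walkLength E (l₁ ++ [a]) +
                (walkLength E ((a :: l₂) ++ [a]) + walkLength E (a :: l₃)) := by
                refine hmono _ _ _ _ le_rfl (hmono _ _ _ _ (hzero _) le_rfl)
            _ = walkLength E (l₁ ++ a :: l₂ ++ a :: l₃) := by
                rw [← e2, ← e1]; simp [List.append_assoc]
        exact le_trans (ih s u v hslen huv hsh hsl hsch) hwl

end Aux3

/-- Shortest path completion: if `G = (G, d)` is a finite connected `𝔐`-metric
`𝔐`-graph and `d'` assigns `0` on the diagonal and to distinct `u, v` the
`⪯`-minimum of the `𝔐`-lengths of the paths from `u` to `v`, then `(G, d')` is an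
`𝔐`-metric space agreeing with `d` wherever `d` is defined. -/
theorem shortest_path_completion {M V : Type*} [AddCommMonoid M] [LinearOrder M]
    [Fintype V]
    (hzero : ∀ a : M, 0 ≤ a)
    (hmono : ∀ a b c d : M, a ≤ c → b ≤ d → a + b ≤ c + d)
    (E : V → V → Option M)
    (hEsymm : ∀ u v : V, E u v = E v u)
    (hEirr : ∀ u : V, E u u = none)
    (hEpos : ∀ u v : V, ∀ x : M, E u v = some x → x ≠ 0)
    (hconn : ∀ u v : V, u ≠ v → ∃ p : List V, IsPathFrom E u v p)
    (hmetric : ∃ dm : V → V → M,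
      (∀ a b : V, dm a b = 0 ↔ a = b) ∧ (∀ a b : V, dm a b = dm b a) ∧
      (∀ a b c : V, dm a c ≤ dm a b + dm b c) ∧
      (∀ u v : V, ∀ x : M, E u v = some x → dm u v = x))
    (d' : V → V → M)
    (hd'refl : ∀ u : V, d' u u = 0)
    (hd'min : ∀ u v : V, u ≠ v →
      (∃ p : List V, IsPathFrom E u v p ∧ walkLength E p = d' u v) ∧
      (∀ p : List V, IsPathFrom E u v p → d' u v ≤ walkLength E p)) :
    ((∀ a b : V, d' a b = 0 ↔ a = b) ∧ (∀ a b : V, d' a b = d' b a) ∧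
      (∀ a b c : V, d' a c ≤ d' a b + d' b c)) ∧
    (∀ u v : V, ∀ x : M, E u v = some x → d' u v = x) := by
  obtain ⟨dm, hdm0, hdms, hdmt, hdmE⟩ := hmetric
  -- dm bounds d' from below
  have hdm_le : ∀ a b : V, a ≠ b → dm a b ≤ d' a b := by
    intro a b hab
    obtain ⟨p, ⟨hh, hl, hnd, hch⟩, hwl⟩ := (hd'min a b hab).1
    rw [← hwl]
    exact dm_le_walk E dm hdm0 hdmt hdmE hmono p a b hh hl hch
  -- symmetry (one direction)
  have hsymm_le : ∀ a b : V, d' a b ≤ d' b a := by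
    intro a b
    by_cases hab : a = b
    · subst hab; exact le_refl _
    · obtain ⟨p, hp, hwl⟩ := (hd'min b a (Ne.symm hab)).1
      have hrev := isPathFrom_reverse E hEsymm hp
      calc d' a b ≤ walkLength E p.reverse := (hd'min a b hab).2 _ hrev
        _ = walkLength E p := wl_reverse E hEsymm p
        _ = d' b a := hwl
  refine ⟨⟨?_, fun a b => le_antisymm (hsymm_le a b) (hsymm_le b a), ?_⟩, ?_⟩
  · -- d' a b = 0 ↔ a = b
    intro a b
    constructor
    · intro h0
      by_contra hab
      have h1 := hdm_le a b hab
      rw [h0] at h1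
      exact hab ((hdm0 a b).mp (le_antisymm h1 (hzero _)))
    · intro h; subst h; exact hd'refl a
  · -- triangle inequality
    intro a b c
    by_cases hac : a = c
    · subst hac; rw [hd'refl]; exact hzero _
    by_cases hab : a = b
    · subst hab; rw [hd'refl, zero_add]
    by_cases hbc : b = c
    · subst hbc; rw [hd'refl, add_zero]
    -- all distinct
    obtain ⟨p, ⟨hph, hpl, hpnd, hpch⟩, hpwl⟩ := (hd'min a b hab).1
    obtain ⟨q, ⟨hqh, hql, hqnd, hqch⟩, hqwl⟩ := (hd'min b c hbc).1
    -- p ends in b : p = p' ++ [b]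
    have hpne : p ≠ [] := by rintro rfl; simp at hph
    obtain ⟨p', hp'⟩ : ∃ p', p = p' ++ [b] := by
      refine ⟨p.dropLast, ?_⟩
      have := List.dropLast_append_getLast hpne
      have hb : p.getLast hpne = b := by
        rw [List.getLast?_eq_getLast hpne] at hpl
        exact Option.some.inj hpl
      rw [← hb]
      exact this.symm
    -- q starts with b : q = b :: qt
    obtain ⟨qt, hq'⟩ : ∃ qt, q = b :: qt := by
      cases q with
      | nil => simp at hqh
      | cons x xs =>
          simp only [List.head?_cons, Option.some.injEq] at hqh
          exact ⟨xs, by rw [hqh]⟩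
    subst hp'; subst hq'
    -- p' ≠ []
    have hp'ne : p' ≠ [] := by
      rintro rfl
      simp only [List.nil_append, List.head?_cons, Option.some.injEq] at hph
      exact hab hph.symm
    -- the concatenated walk
    set r : List V := p' ++ b :: qt with hr
    have hrh : r.head? = some a := by
      rw [hr, List.head?_append]
      rw [List.head?_append] at hph
      cases hh : p'.head? with
      | none => exact absurd (List.head?_eq_none_iff.mp hh) hp'ne
      | some w =>
          rw [hh] at hph
          simp only [Option.or] at hph ⊢
          exact hph
    have hrl : r.getLast? = some c := by
      rw [hr, List.getLast?_append]
      rw [hql]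
      rfl
    have hrch : r.Chain' fun a b => (E a b).isSome := by
      show List.IsChain _ _; rw [hr, List.isChain_append]
      have h1 := List.isChain_append.mp hpch
      refine ⟨h1.1, hqch, ?_⟩
      intro x hx y hy
      simp only [List.head?_cons, Option.mem_def, Option.some.injEq] at hy
      subst hy
      exact h1.2.2 x hx b rfl
    have hrwl : walkLength E r = walkLength E (p' ++ [b]) + walkLength E (b :: qt) :=
      wl_append E b qt p'
    have hrlen : r.length ≤ r.length := le_refl _
    calc d' a c ≤ walkLength E r :=
          d'_le_walk E d' hzero hmono hd'min r.length r a c hrlen hac hrh hrl hrch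
      _ = walkLength E (p' ++ [b]) + walkLength E (b :: qt) := hrwl
      _ = d' a b + d' b c := by rw [hpwl, hqwl]
  · -- agreement with E
    intro u v x hx
    have huv : u ≠ v := by
      rintro rfl
      rw [hEirr u] at hx
      cases hx
    refine le_antisymm ?_ ?_
    · -- d' u v ≤ x via the path [u, v]
      have hpath : IsPathFrom E u v [u, v] := by
        refine ⟨rfl, rfl, ?_, ?_⟩
        · simp [huv]
        · simp [List.Chain', List.isChain_cons_cons, hx]
      have := (hd'min u v huv).2 [u, v] hpath
      calc d' u v ≤ walkLength E [u, v] := this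
        _ = x := by rw [wl_cons2, wl_single, add_zero, hx, Option.getD_some]
    · -- x ≤ d' u v via dm
      have h1 := hdm_le u v huv
      rwa [hdmE u v x hx] at h1
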